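/- Let Σ be a k×k symmetric positive definite real matrix, σ > 0, and x ∈ ℝ^k. Then the maximum of ⟨v, x⟩ over all pairs (v, λ) with v ∈ ℝ^k, λ ≤ σ², and the (k+1)×(k+1) block matrix [[λ, vᵀ],[v, Σ]] positive definite, equals σ·√(xᵀ Σ x). -/

import Mathlib

open Matrix

lemma colv_eq {k : ℕ} (v : Fin k → ℝ) :
    (Matrix.of fun i (_ : Fin 1) => v i) = (Matrix.of fun (_ : Fin 1) j => v j)ᴴ := by
  ext i j; simp [Matrix.conjTranspose_apply]

lemma dot_symm {k : ℕ} {A : Matrix (Fin k) (Fin k) ℝ} (hA : Aᵀ = A)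
    (a b : Fin k → ℝ) : a ⬝ᵥ A *ᵥ b = b ⬝ᵥ A *ᵥ a := by
  rw [dotProduct_mulVec]
  nth_rewrite 1 [← hA]
  rw [vecMul_transpose, dotProduct_comm]

lemma schur_entry {k : ℕ} (T : Matrix (Fin k) (Fin k) ℝ) (v : Fin k → ℝ) (l : ℝ) :
    ((Matrix.of fun _ _ : Fin 1 => l) -
      (Matrix.of fun (_ : Fin 1) j => v j) * T * (Matrix.of fun (_ : Fin 1) j => v j)ᴴ) 0 0
      = l - v ⬝ᵥ T *ᵥ v := by
  simp only [Matrix.sub_apply, Matrix.of_apply, Matrix.mul_apply, Matrix.conjTranspose_apply,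
    star_trivial, dotProduct, mulVec, Finset.sum_mul, Finset.mul_sum, mul_assoc]
  congr 1
  rw [Finset.sum_comm]

lemma herm_one (M : Matrix (Fin 1) (Fin 1) ℝ) : M.IsHermitian := by
  ext i j
  simp [Matrix.conjTranspose_apply, Subsingleton.elim i j]

lemma quad_le_of_posdef {k : ℕ} {S : Matrix (Fin k) (Fin k) ℝ} (hS : S.PosDef)
    {v : Fin k → ℝ} {l : ℝ}
    (hpd : (Matrix.fromBlocks (Matrix.of fun _ _ : Fin 1 => l)
      (Matrix.of fun _ j => v j) (Matrix.of fun i _ => v i) S).PosDef) :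
    v ⬝ᵥ S⁻¹ *ᵥ v ≤ l := by
  haveI : Invertible S := Matrix.invertibleOfIsUnitDet S (isUnit_iff_ne_zero.mpr hS.det_pos.ne')
  rw [colv_eq v] at hpd
  have h := (Matrix.PosDef.fromBlocks₂₂ _ _ hS).mp hpd.posSemidef
  have h2 := h.dotProduct_mulVec_nonneg (fun _ => (1 : ℝ))
  simp only [star_trivial] at h2
  have : (0:ℝ) ≤ ((Matrix.of fun _ _ : Fin 1 => l) -
      (Matrix.of fun (_ : Fin 1) j => v j) * S⁻¹ * (Matrix.of fun (_ : Fin 1) j => v j)ᴴ) 0 0 := by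
    simpa [dotProduct, mulVec, Fin.sum_univ_one] using h2
  rw [schur_entry] at this
  linarith

lemma posdef_fromBlocks {k : ℕ} {S : Matrix (Fin k) (Fin k) ℝ} (hS : S.PosDef)
    {v : Fin k → ℝ} {l : ℝ} (h : v ⬝ᵥ S⁻¹ *ᵥ v < l) :
    (Matrix.fromBlocks (Matrix.of fun _ _ : Fin 1 => l)
      (Matrix.of fun _ j => v j) (Matrix.of fun i _ => v i) S).PosDef := by
  haveI : Invertible S := Matrix.invertibleOfIsUnitDet S (isUnit_iff_ne_zero.mpr hS.det_pos.ne')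
  rw [colv_eq v]
  set A := (Matrix.of fun _ _ : Fin 1 => l)
  set B := (Matrix.of fun (_ : Fin 1) j => v j)
  refine Matrix.PosDef.of_dotProduct_mulVec_pos ?_ ?_
  · rw [Matrix.IsHermitian.fromBlocks₂₂ _ _ hS.1]
    exact herm_one _
  · intro z hz
    have hz' : z = (z ∘ Sum.inl) ⊕ᵥ (z ∘ Sum.inr) := (Sum.elim_comp_inl_inr z).symm
    rw [hz', dotProduct_mulVec,
      Matrix.schur_complement_eq₂₂ A B (z ∘ Sum.inl) (z ∘ Sum.inr) hS.1]
    set x1 := z ∘ Sum.inl with hx1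
    set y1 := z ∘ Sum.inr with hy1
    set w := (S⁻¹ * Bᴴ) *ᵥ x1 + y1 with hw
    have key : ∀ (M : Matrix (Fin 1) (Fin 1) ℝ) (u : Fin 1 → ℝ),
        star u ᵥ* M ⬝ᵥ u = M 0 0 * (u 0 * u 0) := by
      intro M u
      simp [vecMul, dotProduct, Fin.sum_univ_one]
      ring
    have hq : star x1 ᵥ* (A - B * S⁻¹ * Bᴴ) ⬝ᵥ x1 = (l - v ⬝ᵥ S⁻¹ *ᵥ v) * (x1 0 * x1 0) := by
      rw [key, ← schur_entry S⁻¹ v l]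
    by_cases hx10 : x1 = 0
    · have hy0 : y1 ≠ 0 := by
        intro hy
        apply hz
        funext i
        cases i with
        | inl a => exact congrFun hx10 a
        | inr a => exact congrFun hy a
      have hw0 : w = y1 := by simp [hw, hx10]
      have h1 : 0 < star w ᵥ* S ⬝ᵥ w := by
        rw [hw0, ← dotProduct_mulVec]
        exact hS.dotProduct_mulVec_pos hy0
      have h2 : star x1 ᵥ* (A - B * S⁻¹ * Bᴴ) ⬝ᵥ x1 = 0 := by
        rw [hq, hx10]; simp
      linarith
    · have h1 : 0 ≤ star w ᵥ* S ⬝ᵥ w := by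
        rw [← dotProduct_mulVec]
        exact hS.posSemidef.dotProduct_mulVec_nonneg w
      have h2 : 0 < star x1 ᵥ* (A - B * S⁻¹ * Bᴴ) ⬝ᵥ x1 := by
        rw [hq]
        have hx : x1 0 ≠ 0 := by
          intro h0
          apply hx10
          funext i
          rw [Subsingleton.elim i 0]
          exact h0
        exact mul_pos (by linarith) (mul_self_pos.mpr hx)
      linarith

open Matrix in
/-- The supremum of `⟨v, x⟩` over pairs `(v, λ)` with `λ ≤ σ²` and the block matrix
`[[λ, vᵀ],[v, Σ]]` positive definite equals `σ·√(xᵀΣx)`, for `Σ` symmetric positive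
definite and `σ > 0`. -/
theorem stmt0 (k : ℕ) (S : Matrix (Fin k) (Fin k) ℝ) (hS : S.PosDef)
    (σ : ℝ) (hσ : 0 < σ) (x : Fin k → ℝ) :
    sSup {y : ℝ | ∃ (v : Fin k → ℝ) (l : ℝ), l ≤ σ ^ 2 ∧
        (Matrix.fromBlocks (Matrix.of fun _ _ : Fin 1 => l)
          (Matrix.of fun _ j => v j) (Matrix.of fun i _ => v i) S).PosDef ∧
        y = v ⬝ᵥ x} =
      σ * Real.sqrt (x ⬝ᵥ S.mulVec x) := by
  haveI : Invertible S := Matrix.invertibleOfIsUnitDet S (isUnit_iff_ne_zero.mpr hS.det_pos.ne')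
  set T := {y : ℝ | ∃ (v : Fin k → ℝ) (l : ℝ), l ≤ σ ^ 2 ∧
        (Matrix.fromBlocks (Matrix.of fun _ _ : Fin 1 => l)
          (Matrix.of fun _ j => v j) (Matrix.of fun i _ => v i) S).PosDef ∧
        y = v ⬝ᵥ x} with hT
  set E := x ⬝ᵥ S.mulVec x with hE
  have hE0 : 0 ≤ E := by simpa using hS.posSemidef.dotProduct_mulVec_nonneg x
  set q := Real.sqrt E with hq
  have hq0 : 0 ≤ q := Real.sqrt_nonneg _
  have hq2 : q ^ 2 = E := Real.sq_sqrt hE0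
  have hSinvT : (S⁻¹)ᵀ = S⁻¹ := by
    have h : (S⁻¹)ᴴ = S⁻¹ := hS.inv.1
    rwa [Matrix.conjTranspose_eq_transpose_of_trivial] at h
  have h1 : S⁻¹ *ᵥ (S *ᵥ x) = x := by
    rw [Matrix.mulVec_mulVec, Matrix.nonsing_inv_mul S (isUnit_iff_ne_zero.mpr hS.det_pos.ne'),
      Matrix.one_mulVec]
  have h3 : (S *ᵥ x) ⬝ᵥ S⁻¹ *ᵥ (S *ᵥ x) = E := by
    rw [h1, dotProduct_comm]
  have h0mem : (0:ℝ) ∈ T := by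
    refine ⟨0, σ ^ 2, le_refl _, posdef_fromBlocks hS ?_, by simp⟩
    simp [zero_dotProduct]
    positivity
  apply IsLUB.csSup_eq _ ⟨0, h0mem⟩
  constructor
  · rintro y ⟨v, l, hl, hpd, rfl⟩
    have hQ : v ⬝ᵥ S⁻¹ *ᵥ v ≤ σ ^ 2 := le_trans (quad_le_of_posdef hS hpd) hl
    by_cases hxz : x = 0
    · subst hxz
      simp [dotProduct_zero]
      positivity
    · have hEpos : 0 < E := by simpa using hS.dotProduct_mulVec_pos hxz
      have qpos : 0 < q := Real.sqrt_pos.mpr hEpos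
      set t := σ / q with ht'
      have tpos : 0 < t := div_pos hσ qpos
      have ht : t * q = σ := div_mul_cancel₀ σ qpos.ne'
      have hCS : 0 ≤ (v - t • (S *ᵥ x)) ⬝ᵥ S⁻¹ *ᵥ (v - t • (S *ᵥ x)) := by
        simpa using hS.inv.posSemidef.dotProduct_mulVec_nonneg (v - t • (S *ᵥ x))
      have h2 : (S *ᵥ x) ⬝ᵥ S⁻¹ *ᵥ v = v ⬝ᵥ x := by rw [dot_symm hSinvT, h1]
      have h2' : v ⬝ᵥ S⁻¹ *ᵥ (S *ᵥ x) = v ⬝ᵥ x := by rw [← dot_symm hSinvT, h2]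
      have hexp : (v - t • (S *ᵥ x)) ⬝ᵥ S⁻¹ *ᵥ (v - t • (S *ᵥ x)) =
          v ⬝ᵥ S⁻¹ *ᵥ v - 2 * t * (v ⬝ᵥ x) + t ^ 2 * E := by
        simp only [sub_dotProduct, dotProduct_sub, Matrix.mulVec_sub, Matrix.mulVec_smul,
          smul_dotProduct, dotProduct_smul, smul_eq_mul, h2, h2', h3]
        ring
      have h0 : 0 ≤ v ⬝ᵥ S⁻¹ *ᵥ v - 2 * t * (v ⬝ᵥ x) + t ^ 2 * E := hexp ▸ hCS
      have hE' : t ^ 2 * E = σ ^ 2 := by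
        rw [← hq2, show t ^ 2 * q ^ 2 = (t * q) ^ 2 by ring, ht]
      have hfin : t * (v ⬝ᵥ x) ≤ t * (σ * q) := by
        rw [show t * (σ * q) = σ * (t * q) by ring, ht]
        nlinarith
      exact le_of_mul_le_mul_left hfin tpos
  · rintro b hb
    by_cases hxz : x = 0
    · have hEz : E = 0 := by simp [hE, hxz]
      have : q = 0 := by rw [hq, hEz, Real.sqrt_zero]
      rw [this, mul_zero]
      exact hb h0mem
    · have hEpos : 0 < E := by simpa using hS.dotProduct_mulVec_pos hxz
      have qpos : 0 < q := Real.sqrt_pos.mpr hEpos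
      apply le_of_forall_lt
      intro c hc
      set r := max c 0 with hr
      have hr1 : r < σ * q := max_lt hc (by positivity)
      have hr0 : 0 ≤ r := le_max_right _ _
      set m := (r + σ * q) / 2 with hm
      have hcm : c < m := lt_of_le_of_lt (le_max_left c 0) (by rw [hm]; linarith)
      have hm0 : 0 ≤ m := by rw [hm]; positivity
      have hm1 : m < σ * q := by rw [hm]; linarith
      set v := (m / E) • (S *ᵥ x) with hv
      have vx : v ⬝ᵥ x = m := by
        rw [hv, smul_dotProduct, smul_eq_mul, dotProduct_comm, ← hE,
          div_mul_cancel₀ m hEpos.ne']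
      have hQlt : v ⬝ᵥ S⁻¹ *ᵥ v < σ ^ 2 := by
        have : v ⬝ᵥ S⁻¹ *ᵥ v = (m / E) ^ 2 * E := by
          rw [hv]
          simp only [smul_dotProduct, Matrix.mulVec_smul, dotProduct_smul, smul_eq_mul, h3]
          ring
        rw [this, div_pow, div_mul_eq_mul_div,
          div_lt_iff₀ (by positivity : (0:ℝ) < E ^ 2)]
        have hmsq : m ^ 2 < (σ * q) ^ 2 := by nlinarith
        have hmsq' : m ^ 2 < σ ^ 2 * E := by nlinarith
        nlinarith [mul_lt_mul_of_pos_right hmsq' hEpos]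
      have hmem : m ∈ T := ⟨v, σ ^ 2, le_refl _, posdef_fromBlocks hS hQlt, vx.symm⟩
      exact lt_of_lt_of_le hcm (hb hmem)
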